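/- Convexity-based mixing bound for coherence: for any finite ensemble {p_x, ρ_x} of density matrices, C_r(∑_x p_x ρ_x) ≤ ∑_x p_x C_r(ρ_x) + H({p_x}), where H is the Shannon entropy of the mixing distribution. -/

import Mathlib

open Matrix BigOperators
open scoped Kronecker ComplexOrder

/-- Von Neumann entropy in bits, via eigenvalues of a Hermitian matrix
(0 for non-Hermitian matrices, by convention). -/
noncomputable def vNE {n : Type*} [Fintype n] [DecidableEq n]
    (ρ : Matrix n n ℂ) : ℝ :=
  if h : ρ.IsHermitian then -∑ i, h.eigenvalues i * Real.logb 2 (h.eigenvalues i) else 0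

/-- Full dephasing in the computational (standard) basis. -/
noncomputable def dephase {n : Type*} [Fintype n] [DecidableEq n]
    (ρ : Matrix n n ℂ) : Matrix n n ℂ :=
  Matrix.diagonal (fun i => ρ i i)

/-- Relative entropy of coherence, in bits. -/
noncomputable def Cr {n : Type*} [Fintype n] [DecidableEq n]
    (ρ : Matrix n n ℂ) : ℝ :=
  vNE (dephase ρ) - vNE ρ

/-- Density matrix predicate. -/
def IsDensity {n : Type*} [Fintype n] [DecidableEq n]
    (ρ : Matrix n n ℂ) : Prop :=
  ρ.PosSemidef ∧ ρ.trace = 1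

/-- The rank-one projector |ψ⟩⟨ψ|. -/
noncomputable def pureState {n : Type*} [Fintype n] [DecidableEq n]
    (ψ : n → ℂ) : Matrix n n ℂ :=
  Matrix.vecMulVec ψ (star ψ)

/-- Shannon entropy in bits (with the convention 0 · log₂ 0 = 0). -/
noncomputable def shannon {n : Type*} [Fintype n] (p : n → ℝ) : ℝ :=
  -∑ i, p i * Real.logb 2 (p i)

/-- Complete positivity of a linear map on matrices: Λ ⊗ id_k preserves
positive semidefiniteness for every k. -/
def IsCompletelyPositive {n : Type*} [Fintype n] [DecidableEq n]
    (Λ : Matrix n n ℂ →ₗ[ℂ] Matrix n n ℂ) : Prop :=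
  ∀ (k : ℕ) (ρ : Matrix (n × Fin k) (n × Fin k) ℂ), ρ.PosSemidef →
    (Matrix.of fun (p q : n × Fin k) =>
      Λ (Matrix.of fun i j => ρ (i, p.2) (j, q.2)) p.1 q.1).PosSemidef

/-- Trace preservation. -/
def IsTracePreserving {n : Type*} [Fintype n] [DecidableEq n]
    (Λ : Matrix n n ℂ →ₗ[ℂ] Matrix n n ℂ) : Prop :=
  ∀ ρ : Matrix n n ℂ, (Λ ρ).trace = ρ.trace

noncomputable def eta (t : ℝ) : ℝ := -(t * Real.logb 2 t)

lemma eta_concave : ConcaveOn ℝ (Set.Ici 0) eta := by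
  have h : eta = (Real.log 2)⁻¹ • Real.negMulLog := by
    funext t
    simp [eta, Real.negMulLog, Real.logb, div_eq_mul_inv]
    ring
  rw [h]
  exact Real.concaveOn_negMulLog.smul (by positivity)

lemma sum_eta_le {ι κ : Type*} [Fintype ι] [Fintype κ]
    (w : ι → κ → ℝ) (t : κ → ℝ) (c : κ → ℝ)
    (hw0 : ∀ i k, 0 ≤ w i k) (hrow : ∀ i, ∑ k, w i k = 1)
    (hcol : ∀ k, ∑ i, w i k = c k) (ht : ∀ k, 0 ≤ t k) :
    ∑ k, c k * eta (t k) ≤ ∑ i, eta (∑ k, w i k * t k) := by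
  have key : ∀ i, ∑ k, w i k * eta (t k) ≤ eta (∑ k, w i k * t k) := by
    intro i
    have := eta_concave.le_map_sum (t := Finset.univ) (w := w i) (p := t)
      (fun k _ => hw0 i k) (hrow i) (fun k _ => ht k)
    simpa using this
  calc ∑ k, c k * eta (t k) = ∑ k, (∑ i, w i k) * eta (t k) := by
        simp_rw [hcol]
    _ = ∑ i, ∑ k, w i k * eta (t k) := by
        rw [Finset.sum_comm]; simp_rw [Finset.sum_mul]
    _ ≤ ∑ i, eta (∑ k, w i k * t k) := Finset.sum_le_sum fun i _ => key i

lemma unitary_row_sum {d : ℕ} (U : Matrix (Fin d) (Fin d) ℂ)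
    (hU : U ∈ Matrix.unitaryGroup (Fin d) ℂ) (i : Fin d) :
    ∑ m, ‖U i m‖ ^ 2 = 1 := by
  have h := (Matrix.mem_unitaryGroup_iff).mp hU
  have h2 := congrFun (congrFun h i) i
  simp only [Matrix.mul_apply, Matrix.one_apply_eq, Matrix.star_apply, RCLike.star_def] at h2
  have : (((∑ m, ‖U i m‖ ^ 2 : ℝ)) : ℂ) = 1 := by
    rw [Complex.ofReal_sum]
    rw [← h2]
    refine Finset.sum_congr rfl fun m _ => ?_
    rw [Complex.mul_conj']
    push_cast [Complex.sq_norm]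
    simp [Complex.normSq_eq_norm_sq]
  exact_mod_cast this

lemma unitary_col_sum {d : ℕ} (U : Matrix (Fin d) (Fin d) ℂ)
    (hU : U ∈ Matrix.unitaryGroup (Fin d) ℂ) (i : Fin d) :
    ∑ m, ‖U m i‖ ^ 2 = 1 := by
  have := unitary_row_sum (star U) (Unitary.star_mem hU) i
  simpa using this

lemma conj_diag_entry {d : ℕ} (W : Matrix (Fin d) (Fin d) ℂ) (μ : Fin d → ℝ) (i : Fin d) :
    (star W * Matrix.diagonal (fun m => (μ m : ℂ)) * W) i i
      = ((∑ m, ‖W m i‖ ^ 2 * μ m : ℝ) : ℂ) := by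
  rw [Matrix.mul_apply]
  push_cast
  refine Finset.sum_congr rfl fun k _ => ?_
  rw [Matrix.mul_apply]
  rw [Finset.sum_eq_single k]
  · simp only [Matrix.star_apply, RCLike.star_def, Matrix.diagonal_apply_eq]
    rw [mul_comm ((starRingEnd ℂ) (W k i)) (↑(μ k) : ℂ), mul_assoc,
      mul_comm ((starRingEnd ℂ) (W k i)) (W k i), Complex.mul_conj']
    push_cast
    ring
  · intro b _ hb; simp [Matrix.diagonal_apply_ne _ hb]
  · simp

lemma vNE_eq_sum_eta {d : ℕ} {A : Matrix (Fin d) (Fin d) ℂ} (hA : A.IsHermitian) :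
    vNE A = ∑ i, eta (hA.eigenvalues i) := by
  rw [vNE, dif_pos hA, ← Finset.sum_neg_distrib]
  rfl

lemma vNE_diagonal {d : ℕ} (r : Fin d → ℝ) (hr : ∀ i, 0 ≤ r i) :
    vNE (Matrix.diagonal (fun i => (r i : ℂ))) = ∑ i, eta (r i) := by
  set A : Matrix (Fin d) (Fin d) ℂ := Matrix.diagonal (fun i => (r i : ℂ)) with hAdef
  have hpsd : A.PosSemidef :=
    Matrix.PosSemidef.diagonal (fun i => Complex.zero_le_real.mpr (hr i))
  have hA := hpsd.1
  set lam := hA.eigenvalues with hlam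
  have hlam0 : ∀ i, 0 ≤ lam i := hpsd.eigenvalues_nonneg
  set U : Matrix (Fin d) (Fin d) ℂ := (hA.eigenvectorUnitary : Matrix (Fin d) (Fin d) ℂ)
    with hUdef
  have hU : U ∈ Matrix.unitaryGroup (Fin d) ℂ := hA.eigenvectorUnitary.2
  -- lam i = ∑ m ‖U m i‖² r m
  have h1 : ∀ i, lam i = ∑ m, ‖U m i‖ ^ 2 * r m := by
    intro i
    have := hA.conjStarAlgAut_star_eigenvectorUnitary
    simp only [Unitary.conjStarAlgAut_star_apply, Unitary.coe_star] at this
    have h2 := congrFun (congrFun this i) i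
    rw [conj_diag_entry U r i] at h2
    simp only [Matrix.diagonal_apply_eq, Function.comp] at h2
    rw [hlam]
    exact_mod_cast (Complex.ofReal_injective h2).symm
  -- r i = ∑ m ‖U i m‖² lam m
  have h2 : ∀ i, r i = ∑ m, ‖U i m‖ ^ 2 * lam m := by
    intro i
    have hsp := hA.spectral_theorem
    simp only [Unitary.conjStarAlgAut_apply, Unitary.coe_star] at hsp
    have : A = star (star U) * Matrix.diagonal (fun m => ((lam m : ℝ) : ℂ)) * star U := by
      rw [star_star]
      exact hsp
    have h3 := congrFun (congrFun this i) i
    rw [conj_diag_entry (star U) lam i] at h3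
    have h4 : A i i = ((r i : ℝ) : ℂ) := by simp [hAdef]
    rw [h4] at h3
    have h6 := Complex.ofReal_injective h3
    rw [h6]
    refine Finset.sum_congr rfl fun m _ => ?_
    have h5 : ‖star U m i‖ = ‖U i m‖ := by simp [Matrix.star_apply]
    rw [h5]
  -- now two Jensen applications
  have le1 : ∑ m, eta (lam m) ≤ ∑ i, eta (r i) := by
    have := sum_eta_le (fun i m => ‖U i m‖ ^ 2) lam (fun _ => 1)
      (fun i m => by positivity) (fun i => unitary_row_sum U hU i)
      (fun m => unitary_col_sum U hU m) hlam0
    simpa [h2] using this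
  have le2 : ∑ i, eta (r i) ≤ ∑ m, eta (lam m) := by
    have := sum_eta_le (fun i m => ‖U m i‖ ^ 2) r (fun _ => 1)
      (fun i m => by positivity) (fun i => unitary_col_sum U hU i)
      (fun m => unitary_row_sum U hU m) hr
    simpa [h1] using this
  rw [vNE, dif_pos hA, ← Finset.sum_neg_distrib]
  have : ∑ i, eta (r i) = ∑ m, eta (lam m) := le_antisymm le2 le1
  rw [this, hlam]
  rfl

lemma eta_term_split (a b : ℝ) : eta (a * b) = b * eta a + a * eta b := by
  rcases eq_or_ne a 0 with ha | ha
  · simp [ha, eta]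
  rcases eq_or_ne b 0 with hb | hb
  · simp [hb, eta]
  unfold eta
  rw [Real.logb, Real.log_mul ha hb]
  unfold Real.logb
  ring

lemma classical_mixing {d N : ℕ} (p : Fin N → ℝ) (q : Fin N → Fin d → ℝ)
    (hp0 : ∀ x, 0 ≤ p x) (hq0 : ∀ x i, 0 ≤ q x i) (hq1 : ∀ x, ∑ i, q x i = 1) :
    ∑ i, eta (∑ x, p x * q x i)
      ≤ ∑ x, p x * (∑ i, eta (q x i)) + (-∑ x, p x * Real.logb 2 (p x)) := by
  have step1 : ∀ i, eta (∑ x, p x * q x i) ≤ ∑ x, eta (p x * q x i) := by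
    intro i
    set r := ∑ x, p x * q x i with hr
    have hterm : ∀ x, -(p x * q x i * Real.logb 2 r)
        ≤ eta (p x * q x i) := by
      intro x
      have hnn : 0 ≤ p x * q x i := mul_nonneg (hp0 x) (hq0 x i)
      rcases eq_or_lt_of_le hnn with h0 | h0
      · simp [← h0, eta]
      · have hle : p x * q x i ≤ r := by
          refine Finset.single_le_sum (f := fun y => p y * q y i) ?_ (Finset.mem_univ x)
          exact fun y _ => mul_nonneg (hp0 y) (hq0 y i)
        have := Real.logb_le_logb_of_le (b := 2) (by norm_num) h0 hle
        unfold eta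
        nlinarith
    calc eta r = ∑ x, -(p x * q x i * Real.logb 2 r) := by
          unfold eta
          rw [hr, Finset.sum_mul, ← Finset.sum_neg_distrib]
      _ ≤ ∑ x, eta (p x * q x i) := Finset.sum_le_sum fun x _ => hterm x
  calc ∑ i, eta (∑ x, p x * q x i) ≤ ∑ i, ∑ x, eta (p x * q x i) :=
        Finset.sum_le_sum fun i _ => step1 i
    _ = ∑ x, ∑ i, (q x i * eta (p x) + p x * eta (q x i)) := by
        rw [Finset.sum_comm]
        exact Finset.sum_congr rfl fun x _ => Finset.sum_congr rfl fun i _ =>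
          eta_term_split (p x) (q x i)
    _ = ∑ x, p x * (∑ i, eta (q x i)) + (-∑ x, p x * Real.logb 2 (p x)) := by
        rw [← Finset.sum_neg_distrib, ← Finset.sum_add_distrib]
        refine Finset.sum_congr rfl fun x _ => ?_
        rw [Finset.sum_add_distrib, ← Finset.sum_mul, hq1 x, ← Finset.mul_sum]
        unfold eta; ring

lemma conj_entry_gen {d : ℕ} (A U : Matrix (Fin d) (Fin d) ℂ) (hA : A.IsHermitian) (i : Fin d) :
    (star U * A * U) i i
      = ((∑ m, ‖(star (hA.eigenvectorUnitary : Matrix (Fin d) (Fin d) ℂ) * U) m i‖ ^ 2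
          * hA.eigenvalues m : ℝ) : ℂ) := by
  have step : star U * A * U
      = star (star (hA.eigenvectorUnitary : Matrix (Fin d) (Fin d) ℂ) * U)
        * Matrix.diagonal (fun m => ((hA.eigenvalues m : ℝ) : ℂ))
        * (star (hA.eigenvectorUnitary : Matrix (Fin d) (Fin d) ℂ) * U) := by
    rw [StarMul.star_mul, star_star]
    conv_lhs => rw [hA.spectral_theorem, Unitary.conjStarAlgAut_apply]
    simp only [Matrix.mul_assoc]
    rfl
  rw [step, conj_diag_entry]

/-- convexity-based mixing bound for coherence:
C_r(∑ₓ pₓ ρₓ) ≤ ∑ₓ pₓ C_r(ρₓ) + H(p). -/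
theorem coherence_mixing_bound {d N : ℕ}
    (p : Fin N → ℝ) (hp0 : ∀ x, 0 ≤ p x) (hp1 : ∑ x, p x = 1)
    (ρ : Fin N → Matrix (Fin d) (Fin d) ℂ) (hρ : ∀ x, IsDensity (ρ x)) :
    Cr (∑ x, (p x : ℂ) • ρ x) ≤ ∑ x, p x * Cr (ρ x) + shannon p := by
  have hterm : ∀ x, ((p x : ℂ) • ρ x).PosSemidef := by
    intro x
    refine Matrix.PosSemidef.of_dotProduct_mulVec_nonneg ?_ ?_
    · have h := (hρ x).1.1
      show ((p x : ℂ) • ρ x)ᴴ = (p x : ℂ) • ρ x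
      rw [Matrix.conjTranspose_smul, h]
      simp [Complex.conj_ofReal]
    · intro y
      rw [Matrix.smul_mulVec, dotProduct_smul, smul_eq_mul]
      exact mul_nonneg (Complex.zero_le_real.mpr (hp0 x)) ((hρ x).1.dotProduct_mulVec_nonneg y)
  have hbar : (∑ x, (p x : ℂ) • ρ x).PosSemidef :=
    Finset.sum_induction _ _ (fun A B hA hB => hA.add hB) Matrix.PosSemidef.zero
      (fun x _ => hterm x)
  set ρbar : Matrix (Fin d) (Fin d) ℂ := ∑ x, (p x : ℂ) • ρ x with hρbar
  set q : Fin N → Fin d → ℝ := fun x i => ((ρ x) i i).re with hqdef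
  have hdiag : ∀ x i, (ρ x) i i = ((q x i : ℝ) : ℂ) := by
    intro x i
    have h := (hρ x).1.1
    have him : ((ρ x) i i).im = 0 := by
      have := congrFun (congrFun h i) i
      simp only [Matrix.conjTranspose_apply, RCLike.star_def] at this
      have := congrArg Complex.im this
      simp only [Complex.conj_im] at this
      linarith
    exact (Complex.ext (by simp [hqdef]) (by simp [hqdef, him])).symm
  have hq0 : ∀ x i, 0 ≤ q x i := by
    intro x i
    have h0 := (hρ x).1.dotProduct_mulVec_nonneg (Pi.single i 1)
    simp only [dotProduct, Matrix.mulVec_single, Pi.star_apply, Pi.single_apply] at h0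
    simp only [apply_ite, star_one, star_zero, ite_mul, one_mul, zero_mul, mul_one,
      Finset.sum_ite_eq', Finset.mem_univ, if_true] at h0
    exact (Complex.le_def.mp h0).1.trans_eq (by simp [hqdef])
  have hq1 : ∀ x, ∑ i, q x i = 1 := by
    intro x
    have h := (hρ x).2
    rw [Matrix.trace] at h
    have : ((∑ i, q x i : ℝ) : ℂ) = 1 := by
      push_cast
      rw [← h]
      exact (Finset.sum_congr rfl fun i _ => (hdiag x i).symm)
    exact_mod_cast this
  set r : Fin d → ℝ := fun i => ∑ x, p x * q x i with hrdef
  have hr0 : ∀ i, 0 ≤ r i := fun i =>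
    Finset.sum_nonneg fun x _ => mul_nonneg (hp0 x) (hq0 x i)
  have hbar_diag : ∀ i, ρbar i i = ((r i : ℝ) : ℂ) := by
    intro i
    rw [hρbar, Matrix.sum_apply]
    simp only [Matrix.smul_apply, smul_eq_mul]
    rw [hrdef]
    push_cast
    exact Finset.sum_congr rfl fun x _ => by rw [hdiag x i]
  have hdeph_bar : vNE (dephase ρbar) = ∑ i, eta (r i) := by
    have : dephase ρbar = Matrix.diagonal (fun i => ((r i : ℝ) : ℂ)) := by
      unfold dephase
      rw [show (fun i => ρbar i i) = (fun i => ((r i : ℝ) : ℂ)) from funext hbar_diag]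
    rw [this, vNE_diagonal r hr0]
  have hdeph_x : ∀ x, vNE (dephase (ρ x)) = ∑ i, eta (q x i) := by
    intro x
    have : dephase (ρ x) = Matrix.diagonal (fun i => ((q x i : ℝ) : ℂ)) := by
      unfold dephase
      rw [show (fun i => (ρ x) i i) = (fun i => ((q x i : ℝ) : ℂ)) from funext (hdiag x)]
    rw [this, vNE_diagonal _ (hq0 x)]
  have upper : vNE (dephase ρbar) ≤ ∑ x, p x * vNE (dephase (ρ x)) + shannon p := by
    rw [hdeph_bar]
    calc ∑ i, eta (r i) ≤ ∑ x, p x * (∑ i, eta (q x i)) + (-∑ x, p x * Real.logb 2 (p x)) :=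
          classical_mixing p q hp0 hq0 hq1
      _ = ∑ x, p x * vNE (dephase (ρ x)) + shannon p := by
          rw [shannon]
          congr 1
          exact Finset.sum_congr rfl fun x _ => by rw [hdeph_x x]
  -- concavity part
  have hH := hbar.1
  have hU : (hH.eigenvectorUnitary : Matrix (Fin d) (Fin d) ℂ) ∈ Matrix.unitaryGroup (Fin d) ℂ :=
    hH.eigenvectorUnitary.2
  -- notation
  let U : Matrix (Fin d) (Fin d) ℂ := (hH.eigenvectorUnitary : Matrix (Fin d) (Fin d) ℂ)
  let W : Fin N → Matrix (Fin d) (Fin d) ℂ :=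
    fun x => star ((hρ x).1.1.eigenvectorUnitary : Matrix (Fin d) (Fin d) ℂ) * U
  let μ : Fin N → Fin d → ℝ := fun x => (hρ x).1.1.eigenvalues
  have hWu : ∀ x, W x ∈ Matrix.unitaryGroup (Fin d) ℂ := fun x =>
    mul_mem (Unitary.star_mem ((hρ x).1.1.eigenvectorUnitary).2) hU
  have claimA : ∀ x i, (star U * ρ x * U) i i
      = ((∑ m, ‖W x m i‖ ^ 2 * μ x m : ℝ) : ℂ) :=
    fun x i => conj_entry_gen (ρ x) U (hρ x).1.1 i
  have claimB : ∀ i, hH.eigenvalues i = ∑ x, p x * (∑ m, ‖W x m i‖ ^ 2 * μ x m) := by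
    intro i
    have hdg := hH.conjStarAlgAut_star_eigenvectorUnitary
    simp only [Unitary.conjStarAlgAut_star_apply, Unitary.coe_star] at hdg
    have h2 := congrFun (congrFun hdg i) i
    simp only [Matrix.diagonal_apply_eq, Function.comp] at h2
    have hexp : star U * ρbar * U = ∑ x, (p x : ℂ) • (star U * ρ x * U) := by
      rw [hρbar, Matrix.mul_sum, Matrix.sum_mul]
      exact Finset.sum_congr rfl fun x _ => by
        rw [Matrix.mul_smul, Matrix.smul_mul]
    rw [show star U * ρbar * U = Matrix.diagonal (RCLike.ofReal ∘ hH.eigenvalues) from hdg] at hexp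
    have h3 := congrFun (congrFun hexp.symm i) i
    rw [Matrix.sum_apply] at h3
    simp only [Matrix.smul_apply, smul_eq_mul, Matrix.diagonal_apply_eq, Function.comp] at h3
    have h3' : ∑ x, (p x : ℂ) * (star U * ρ x * U) i i = ((hH.eigenvalues i : ℝ) : ℂ) := h3
    have : (((∑ x, p x * (∑ m, ‖W x m i‖ ^ 2 * μ x m)) : ℝ) : ℂ)
        = ((hH.eigenvalues i : ℝ) : ℂ) := by
      rw [← h3']
      push_cast
      refine Finset.sum_congr rfl fun x _ => ?_
      rw [claimA x i]
      push_cast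
      ring
    exact_mod_cast this.symm
  have hμ0 : ∀ x m, 0 ≤ μ x m := fun x m => (hρ x).1.eigenvalues_nonneg m
  have lower : ∑ x, p x * vNE (ρ x) ≤ vNE ρbar := by
    have key := sum_eta_le (ι := Fin d) (κ := Fin N × Fin d)
      (fun i k => p k.1 * ‖W k.1 k.2 i‖ ^ 2) (fun k => μ k.1 k.2) (fun k => p k.1)
      (fun i k => mul_nonneg (hp0 k.1) (by positivity))
      (fun i => by
        show ∑ k : Fin N × Fin d, p k.1 * ‖W k.1 k.2 i‖ ^ 2 = 1
        rw [Fintype.sum_prod_type, ← hp1]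
        refine Finset.sum_congr rfl fun x _ => ?_
        show ∑ y, p x * ‖W x y i‖ ^ 2 = p x
        rw [← Finset.mul_sum, unitary_col_sum (W x) (hWu x) i, mul_one])
      (fun k => by
        show ∑ i, p k.1 * ‖W k.1 k.2 i‖ ^ 2 = p k.1
        rw [← Finset.mul_sum, unitary_row_sum (W k.1) (hWu k.1) k.2, mul_one])
      (fun k => hμ0 k.1 k.2)
    have hsum : ∀ i, (∑ k : Fin N × Fin d, p k.1 * ‖W k.1 k.2 i‖ ^ 2 * μ k.1 k.2)
        = hH.eigenvalues i := by
      intro i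
      rw [Fintype.sum_prod_type, claimB i]
      refine Finset.sum_congr rfl fun x _ => ?_
      show ∑ m, p x * ‖W x m i‖ ^ 2 * μ x m = p x * ∑ m, ‖W x m i‖ ^ 2 * μ x m
      calc ∑ m, p x * ‖W x m i‖ ^ 2 * μ x m
          = ∑ m, p x * (‖W x m i‖ ^ 2 * μ x m) :=
            Finset.sum_congr rfl fun m _ => mul_assoc _ _ _
        _ = p x * ∑ m, ‖W x m i‖ ^ 2 * μ x m := by rw [← Finset.mul_sum]
    have hlhs : (∑ k : Fin N × Fin d, p k.1 * eta (μ k.1 k.2)) = ∑ x, p x * vNE (ρ x) := by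
      rw [Fintype.sum_prod_type]
      refine Finset.sum_congr rfl fun x _ => ?_
      show ∑ m, p x * eta (μ x m) = p x * vNE (ρ x)
      rw [← Finset.mul_sum, vNE_eq_sum_eta (hρ x).1.1]
    have hrhs : vNE ρbar = ∑ i, eta (hH.eigenvalues i) := vNE_eq_sum_eta hH
    rw [hrhs, ← hlhs]
    calc (∑ k : Fin N × Fin d, p k.1 * eta (μ k.1 k.2))
        ≤ ∑ i, eta (∑ k : Fin N × Fin d, p k.1 * ‖W k.1 k.2 i‖ ^ 2 * μ k.1 k.2) := key
      _ = ∑ i, eta (hH.eigenvalues i) := Finset.sum_congr rfl fun i _ => by rw [hsum i]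
  have hCr : ∑ x, p x * Cr (ρ x)
      = ∑ x, p x * vNE (dephase (ρ x)) - ∑ x, p x * vNE (ρ x) := by
    rw [← Finset.sum_sub_distrib]
    exact Finset.sum_congr rfl fun x _ => by rw [Cr]; ring
  have hfin : Cr ρbar = vNE (dephase ρbar) - vNE ρbar := rfl
  rw [hfin, hCr]
  linarith [upper, lower]
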